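/- Let X_1, ..., X_n, X_{n+1} be exchangeable real-valued random variables (nonconformity scores) and let α ∈ (0,1) with ⌈(n+1)(1-α)⌉ ≤ n. Define q̂ as the ⌈(n+1)(1-α)⌉-th smallest value among X_1, ..., X_n. Then P(X_{n+1} ≤ q̂) ≥ 1 - α. -/

import Mathlib

open MeasureTheory
open scoped ENNReal

/-- The `j`-th smallest value (1-indexed) among `f 0, ..., f (n-1)`. -/
noncomputable def orderStat {n : ℕ} (f : Fin n → ℝ) (j : ℕ) : ℝ :=
  ((Multiset.map f Finset.univ.val).sort (· ≤ ·)).getD (j - 1) 0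

/-- Exchangeability: the joint law is invariant under permutation of the indices. -/
def Exchangeable {Ω : Type*} [MeasurableSpace Ω] (μ : Measure Ω) {n : ℕ}
    (X : Fin n → Ω → ℝ) : Prop :=
  ∀ σ : Equiv.Perm (Fin n),
    Measure.map (fun ω i => X (σ i) ω) μ = Measure.map (fun ω i => X i ω) μ

open List in

lemma sorted_le_getElem_iff {l : List ℝ} (hl : l.Pairwise (· ≤ ·)) {j : ℕ} (hj : j < l.length) (x : ℝ) :
    x ≤ l[j] ↔ l.countP (fun a => decide (a < x)) ≤ j := by
  constructor
  · intro hx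
    have hsplit : l.countP (fun a => decide (a < x)) =
        (l.take j).countP (fun a => decide (a < x)) + (l.drop j).countP (fun a => decide (a < x)) := by
      rw [← List.countP_append, List.take_append_drop]
    have hdrop : (l.drop j).countP (fun a => decide (a < x)) = 0 := by
      rw [List.countP_eq_zero]
      intro a ha
      obtain ⟨i, hi, rfl⟩ := List.mem_iff_getElem.1 ha
      have hji : j + i < l.length := by simp [List.length_drop] at hi; omega
      simp only [List.getElem_drop]
      have : l[j] ≤ l[j + i] := by
        have := hl.rel_get_of_le (a := ⟨j, hj⟩) (b := ⟨j + i, hji⟩) (by simp)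
        simpa using this
      simp only [decide_eq_true_eq]
      linarith
    rw [hsplit, hdrop]
    have h1 : (l.take j).countP (fun a => decide (a < x)) ≤ (l.take j).length :=
      List.countP_le_length
    have h2 : (l.take j).length ≤ j := by simp
    omega
  · intro hc
    by_contra hx
    push_neg at hx
    have htake : (l.take (j+1)).countP (fun a => decide (a < x)) = j + 1 := by
      have hlen : (l.take (j+1)).length = j + 1 := by simp; omega
      rw [List.countP_eq_length.2, hlen]
      intro a ha
      obtain ⟨i, hi, rfl⟩ := List.mem_iff_getElem.1 ha
      rw [List.getElem_take]
      have hij : i ≤ j := by rw [hlen] at hi; omega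
      have : l[i] ≤ l[j] := by
        have := hl.rel_get_of_le (a := ⟨i, by omega⟩) (b := ⟨j, hj⟩) (by simpa)
        simpa using this
      simp only [decide_eq_true_eq]
      linarith
    have := List.Sublist.countP_le (p := fun a => decide (a < x)) (List.take_sublist (j+1) l)
    omega

open Finset in
lemma le_orderStat_iff {n : ℕ} (f : Fin n → ℝ) {j : ℕ} (hj1 : 1 ≤ j) (hjn : j ≤ n) (x : ℝ) :
    x ≤ orderStat f j ↔ (univ.filter (fun i => f i < x)).card < j := by
  set l := ((Multiset.map f Finset.univ.val).sort (· ≤ ·)) with hl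
  have hlen : l.length = n := by
    rw [hl, Multiset.length_sort, Multiset.card_map]
    simp
  have hsorted : l.Pairwise (· ≤ ·) := Multiset.pairwise_sort _ _
  have hj : j - 1 < l.length := by omega
  have hos : orderStat f j = l[j-1] := List.getD_eq_getElem _ _ hj
  have hcard : (univ.filter (fun i => f i < x)).card = l.countP (fun a => decide (a < x)) := by
    have h1 : (Multiset.map f univ.val : Multiset ℝ) = ↑l := (Multiset.sort_eq _ _).symm
    have h2 : Multiset.countP (· < x) (Multiset.map f univ.val) = l.countP (fun a => decide (a < x)) := by
      rw [h1]; exact Multiset.coe_countP _ _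
    rw [← h2, Multiset.countP_map]
    rfl
  rw [hos, hcard, sorted_le_getElem_iff hsorted hj x]
  omega

open Finset in
lemma orderStat_count_le {n : ℕ} (f : Fin n → ℝ) {j : ℕ} (hj1 : 1 ≤ j) (hjn : j ≤ n) :
    j ≤ (univ.filter (fun i => f i ≤ orderStat f j)).card := by
  set l := ((Multiset.map f Finset.univ.val).sort (· ≤ ·)) with hl
  have hlen : l.length = n := by
    rw [hl, Multiset.length_sort, Multiset.card_map]; simp
  have hsorted : l.Pairwise (· ≤ ·) := Multiset.pairwise_sort _ _
  have hj : j - 1 < l.length := by omega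
  have hos : orderStat f j = l[j-1] := List.getD_eq_getElem _ _ hj
  have hcard : (univ.filter (fun i => f i ≤ orderStat f j)).card
      = l.countP (fun a => decide (a ≤ orderStat f j)) := by
    have h1 : (Multiset.map f univ.val : Multiset ℝ) = ↑l := (Multiset.sort_eq _ _).symm
    have h2 : Multiset.countP (· ≤ orderStat f j) (Multiset.map f univ.val)
        = l.countP (fun a => decide (a ≤ orderStat f j)) := by
      rw [h1]; exact Multiset.coe_countP _ _
    rw [← h2, Multiset.countP_map]
    rfl
  rw [hcard]
  -- all elements of take j l satisfy the predicate
  have htake : (l.take j).countP (fun a => decide (a ≤ orderStat f j)) = j := by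
    have hlent : (l.take j).length = j := by simp; omega
    rw [List.countP_eq_length.2, hlent]
    intro a ha
    obtain ⟨i, hi, rfl⟩ := List.mem_iff_getElem.1 ha
    rw [List.getElem_take]
    have hij : i ≤ j - 1 := by rw [hlent] at hi; omega
    have : l[i]'(by omega) ≤ l[j-1] := by
      have := hsorted.rel_get_of_le (a := ⟨i, by omega⟩) (b := ⟨j-1, hj⟩) (by simpa)
      simpa using this
    simp only [decide_eq_true_eq, hos]
    linarith
  have := List.Sublist.countP_le (p := fun a => decide (a ≤ orderStat f j)) (List.take_sublist j l)
  omega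

open Finset in
lemma counting_lemma {m : ℕ} (v : Fin m → ℝ) {k : ℕ} (hk1 : 1 ≤ k) (hkm : k ≤ m) :
    k ≤ (univ.filter (fun j => (univ.filter (fun i => v i < v j)).card < k)).card := by
  have ht : ∀ j, v j ≤ orderStat v k → (univ.filter (fun i => v i < v j)).card < k := by
    intro j hj
    have hsub : univ.filter (fun i => v i < v j) ⊆ univ.filter (fun i => v i < orderStat v k) := by
      intro i hi; simp only [Finset.mem_filter, Finset.mem_univ, true_and] at hi ⊢; linarith
    have h2 := (le_orderStat_iff v hk1 hkm (orderStat v k)).1 le_rfl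
    exact lt_of_le_of_lt (Finset.card_le_card hsub) h2
  calc k ≤ (univ.filter (fun j => v j ≤ orderStat v k)).card := orderStat_count_le v hk1 hkm
    _ ≤ _ := Finset.card_le_card (fun j hj => by
        simp only [Finset.mem_filter, Finset.mem_univ, true_and] at hj ⊢; exact ht j hj)

/-- Conformal coverage guarantee. -/
theorem conformal_coverage
    {Ω : Type*} [MeasurableSpace Ω] (μ : Measure Ω) [IsProbabilityMeasure μ]
    {n : ℕ} (X : Fin (n + 1) → Ω → ℝ) (hmeas : ∀ i, Measurable (X i))
    (hexch : Exchangeable μ X)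
    (α : ℝ) (hα : α ∈ Set.Ioo (0 : ℝ) 1)
    (hidx : ⌈((n : ℝ) + 1) * (1 - α)⌉₊ ≤ n) :
    μ {ω | X (Fin.last n) ω ≤
        orderStat (fun i : Fin n => X i.castSucc ω) ⌈((n : ℝ) + 1) * (1 - α)⌉₊} ≥
      ENNReal.ofReal (1 - α) := by
  obtain ⟨hα0, hα1⟩ := hα
  set k := ⌈((n : ℝ) + 1) * (1 - α)⌉₊ with hk
  have hk1 : 1 ≤ k := by
    rw [hk]
    have : (0:ℝ) < ((n : ℝ) + 1) * (1 - α) := by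
      apply mul_pos (by positivity); linarith
    exact Nat.one_le_iff_ne_zero.2 (Nat.ceil_pos.2 this).ne'
  set A : Fin (n+1) → Set Ω :=
    fun j => {ω | (Finset.univ.filter fun i => X i ω < X j ω).card < k} with hA
  have hcardmeas : ∀ j, Measurable (fun ω => ((Finset.univ.filter fun i => X i ω < X j ω).card : ℕ)) := by
    intro j
    have h : (fun ω => (Finset.univ.filter fun i => X i ω < X j ω).card)
        = fun ω => ∑ i : Fin (n+1), if X i ω < X j ω then 1 else 0 := by
      funext ω; rw [Finset.card_filter]
    rw [h]
    exact Finset.measurable_sum _ (fun i _ =>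
      Measurable.ite (measurableSet_lt (hmeas i) (hmeas j)) measurable_const measurable_const)
  have hAmeas : ∀ j, MeasurableSet (A j) := by
    intro j
    exact (hcardmeas j) measurableSet_Iio
  set B : Set (Fin (n+1) → ℝ) :=
    {v | (Finset.univ.filter fun i => v i < v (Fin.last n)).card < k} with hB
  have hBmeas : MeasurableSet B := by
    have h : Measurable (fun v : Fin (n+1) → ℝ =>
        (Finset.univ.filter fun i => v i < v (Fin.last n)).card) := by
      have h2 : (fun v : Fin (n+1) → ℝ => (Finset.univ.filter fun i => v i < v (Fin.last n)).card)
          = fun v => ∑ i : Fin (n+1), if v i < v (Fin.last n) then 1 else 0 := by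
        funext v; rw [Finset.card_filter]
      rw [h2]
      exact Finset.measurable_sum _ (fun i _ =>
        Measurable.ite (measurableSet_lt (measurable_pi_apply i) (measurable_pi_apply _))
          measurable_const measurable_const)
    exact h measurableSet_Iio
  have hmap : ∀ j, μ (A j) = μ (A (Fin.last n)) := by
    intro j
    set σ := Equiv.swap j (Fin.last n) with hσ
    have hT : Measurable (fun ω i => X (σ i) ω) := measurable_pi_lambda _ (fun i => hmeas _)
    have hTid : Measurable (fun ω (i : Fin (n+1)) => X i ω) := measurable_pi_lambda _ (fun i => hmeas _)
    have h1 : A j = (fun ω i => X (σ i) ω) ⁻¹' B := by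
      ext ω
      simp only [hA, hB, Set.mem_preimage, Set.mem_setOf_eq]
      have hσlast : σ (Fin.last n) = j := Equiv.swap_apply_right _ _
      have hcards : (Finset.univ.filter fun i => X (σ i) ω < X (σ (Fin.last n)) ω).card
          = (Finset.univ.filter fun i => X i ω < X j ω).card := by
        simp only [hσlast]
        rw [Finset.card_filter, Finset.card_filter]
        exact Equiv.sum_comp σ (fun i => if X i ω < X j ω then 1 else 0)
      rw [hcards]
    have h2 : A (Fin.last n) = (fun ω (i : Fin (n+1)) => X i ω) ⁻¹' B := rfl
    rw [h1, h2, ← Measure.map_apply hT hBmeas, ← Measure.map_apply hTid hBmeas, hexch σ]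
  have hsum_ge : (k : ℝ≥0∞) ≤ ∑ j : Fin (n+1), μ (A j) := by
    have hpt : ∀ ω, (k : ℝ≥0∞) ≤ ∑ j : Fin (n+1), (A j).indicator (fun _ => (1:ℝ≥0∞)) ω := by
      intro ω
      have hc := counting_lemma (fun i => X i ω) hk1 (by omega : k ≤ n+1)
      calc (k:ℝ≥0∞) ≤ ((Finset.univ.filter fun j =>
            (Finset.univ.filter fun i : Fin (n+1) => X i ω < X j ω).card < k).card : ℝ≥0∞) := by
            exact_mod_cast hc
        _ = ∑ j : Fin (n+1), (A j).indicator (fun _ => (1:ℝ≥0∞)) ω := by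
            rw [Finset.card_filter]
            push_cast
            refine Finset.sum_congr rfl (fun j _ => ?_)
            by_cases h : (Finset.univ.filter fun i : Fin (n+1) => X i ω < X j ω).card < k
            · simp [Set.indicator, hA, h]
            · simp [Set.indicator, hA, h]
    calc (k:ℝ≥0∞) = ∫⁻ _, (k:ℝ≥0∞) ∂μ := by simp
      _ ≤ ∫⁻ ω, ∑ j : Fin (n+1), (A j).indicator (fun _ => (1:ℝ≥0∞)) ω ∂μ := lintegral_mono hpt
      _ = ∑ j : Fin (n+1), ∫⁻ ω, (A j).indicator (fun _ => (1:ℝ≥0∞)) ω ∂μ :=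
          lintegral_finset_sum _ (fun j _ => measurable_const.indicator (hAmeas j))
      _ = ∑ j : Fin (n+1), μ (A j) := by
          refine Finset.sum_congr rfl (fun j _ => ?_)
          rw [lintegral_indicator (hAmeas j)]
          simp
  have hsum_eq : ∑ j : Fin (n+1), μ (A j) = ((n:ℝ≥0∞)+1) * μ (A (Fin.last n)) := by
    calc ∑ j : Fin (n+1), μ (A j) = ∑ _j : Fin (n+1), μ (A (Fin.last n)) :=
          Finset.sum_congr rfl (fun j _ => hmap j)
      _ = ((n:ℝ≥0∞)+1) * μ (A (Fin.last n)) := by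
          rw [Finset.sum_const, Finset.card_univ, Fintype.card_fin, nsmul_eq_mul]
          push_cast
          ring
  have hmain : (k : ℝ≥0∞) ≤ ((n:ℝ≥0∞)+1) * μ (A (Fin.last n)) := hsum_eq ▸ hsum_ge
  have hfinal : ENNReal.ofReal (1 - α) ≤ μ (A (Fin.last n)) := by
    have hne0 : ((n:ℝ≥0∞)+1) ≠ 0 := by simp
    have hnetop : ((n:ℝ≥0∞)+1) ≠ ⊤ := by simp
    have hdiv : (k:ℝ≥0∞) / ((n:ℝ≥0∞)+1) ≤ μ (A (Fin.last n)) := by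
      rw [ENNReal.div_le_iff hne0 hnetop]
      rw [mul_comm] at hmain
      exact hmain
    refine le_trans ?_ hdiv
    rw [ENNReal.le_div_iff_mul_le (Or.inl hne0) (Or.inl hnetop)]
    have h1 : ((n:ℝ≥0∞)+1) = ENNReal.ofReal ((n:ℝ)+1) := by
      rw [ENNReal.ofReal_add (by positivity) (by norm_num), ENNReal.ofReal_natCast,
        ENNReal.ofReal_one]
    rw [h1, ← ENNReal.ofReal_mul (by linarith)]
    calc ENNReal.ofReal ((1-α) * ((n:ℝ)+1)) ≤ ENNReal.ofReal (k:ℝ) := by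
          apply ENNReal.ofReal_le_ofReal
          have h2 := Nat.le_ceil (((n:ℝ)+1)*(1-α))
          rw [← hk] at h2
          nlinarith
      _ = (k:ℝ≥0∞) := ENNReal.ofReal_natCast k
  have hevent : {ω | X (Fin.last n) ω ≤ orderStat (fun i : Fin n => X i.castSucc ω) k}
      = A (Fin.last n) := by
    ext ω
    simp only [hA, Set.mem_setOf_eq]
    rw [le_orderStat_iff _ hk1 hidx]
    have hc : (Finset.univ.filter fun i : Fin (n+1) => X i ω < X (Fin.last n) ω).card
        = (Finset.univ.filter fun i : Fin n => X i.castSucc ω < X (Fin.last n) ω).card := by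
      rw [Finset.card_filter, Finset.card_filter, Fin.sum_univ_castSucc]
      simp
    rw [hc]
  rw [ge_iff_le, hevent]
  exact hfinal
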